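/- Let α be a nonzero complex number and β its complex conjugate, and let m ≥ 2 be an integer with |α| ≥ 2 (so that |αβ| = |α|^2 ≥ 4). If |α^m + β^m| < 1.6·|α|^m, then |α^{3m} + β^{3m}| ≥ 0.44·|α|^{2m}·|α^m + β^m|. -/

import Mathlib

theorem stmt_8 (α : ℂ) (hα : α ≠ 0) (β : ℂ) (hβ : β = starRingEnd ℂ α)
    (m : ℕ) (hm : 2 ≤ m) (habs : 2 ≤ ‖α‖)
    (h : ‖α ^ m + β ^ m‖ < 1.6 * ‖α‖ ^ m) :
    0.44 * ‖α‖ ^ (2 * m) * ‖α ^ m + β ^ m‖ ≤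
      ‖α ^ (3 * m) + β ^ (3 * m)‖ := by
  set r := ‖α‖ with hr
  have hβm : β ^ m = starRingEnd ℂ (α ^ m) := by rw [hβ, map_pow]
  set x : ℝ := (α ^ m).re with hx
  have hs : α ^ m + β ^ m = ((2 * x : ℝ) : ℂ) := by
    rw [hβm, Complex.add_conj]
  have hc : α ^ m * β ^ m = ((r ^ (2 * m) : ℝ) : ℂ) := by
    rw [hβm, Complex.mul_conj]
    norm_cast
    rw [← Complex.sq_norm, norm_pow, ← pow_mul, mul_comm m 2]
  have hiden : α ^ (3 * m) + β ^ (3 * m)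
      = (α ^ m + β ^ m) ^ 3 - 3 * (α ^ m * β ^ m) * (α ^ m + β ^ m) := by
    rw [mul_comm 3 m, pow_mul, pow_mul]; ring
  have habs3 : ‖α ^ (3 * m) + β ^ (3 * m)‖
      = |2 * x| * |(2 * x) ^ 2 - 3 * r ^ (2 * m)| := by
    rw [hiden, hs, hc]
    have : ((2 * x : ℝ) : ℂ) ^ 3 - 3 * ((r ^ (2 * m) : ℝ) : ℂ) * ((2 * x : ℝ) : ℂ)
        = (((2 * x) * ((2 * x) ^ 2 - 3 * r ^ (2 * m)) : ℝ) : ℂ) := by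
      push_cast; ring
    rw [this, Complex.norm_real, Real.norm_eq_abs, abs_mul]
  have hsabs : ‖α ^ m + β ^ m‖ = |2 * x| := by
    rw [hs, Complex.norm_real, Real.norm_eq_abs]
  rw [habs3, hsabs]
  rw [hsabs] at h
  have hr0 : (0:ℝ) ≤ r ^ m := by positivity
  have h2 : (2 * x) ^ 2 < (1.6 * r ^ m) ^ 2 := by
    have := abs_nonneg (2 * x)
    nlinarith [sq_abs (2 * x)]
  have hkey : 0.44 * r ^ (2 * m) ≤ |(2 * x) ^ 2 - 3 * r ^ (2 * m)| := by
    have h2m : r ^ (2 * m) = (r ^ m) ^ 2 := by rw [pow_mul, pow_right_comm]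
    rw [abs_sub_comm]
    refine le_trans ?_ (le_abs_self _)
    nlinarith [sq_nonneg (2 * x)]
  have := abs_nonneg (2 * x)
  nlinarith
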